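/- If A is 1-equivalent to B, then A is computably isomorphic to B; in particular there is a computable permutation h of ℕ with h(B) = A, which maps Bᶜ bijectively onto Aᶜ. -/

import Mathlib

/-- Many-one reducibility on subsets of ℕ. -/
def ManyOneRed (X Y : Set ℕ) : Prop :=
  ∃ f : ℕ → ℕ, Computable f ∧ ∀ x, x ∈ X ↔ f x ∈ Y

/-- Many-one equivalence. -/
def ManyOneEq (X Y : Set ℕ) : Prop := ManyOneRed X Y ∧ ManyOneRed Y X

/-- One-one reducibility on subsets of ℕ. -/
def OneOneRed (X Y : Set ℕ) : Prop :=
  ∃ f : ℕ → ℕ, Computable f ∧ Function.Injective f ∧ ∀ x, x ∈ X ↔ f x ∈ Y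

/-- One-one equivalence. -/
def OneOneEq (X Y : Set ℕ) : Prop := OneOneRed X Y ∧ OneOneRed Y X

/-- `A × ℕ` coded into ℕ via the standard computable pairing bijection. -/
def timesNat (A : Set ℕ) : Set ℕ :=
  {m | ∃ x ∈ A, ∃ n : ℕ, m = Nat.pair x n}

/-- `C` is a cylinder if `C ≡₁ A × ℕ` for some `A`. -/
def Cylinder (C : Set ℕ) : Prop := ∃ A : Set ℕ, OneOneEq C (timesNat A)

/-- `S` is computably enumerable: the domain of a partial computable function. -/
def CE (S : Set ℕ) : Prop :=
  ∃ ψ : ℕ →. ℕ, Partrec ψ ∧ ∀ x, x ∈ S ↔ (ψ x).Dom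

/-- pm-reducibility: `x ∈ X ↔ ψ(x)↓ ∧ ψ(x) ∈ Y` for a partial computable `ψ`. -/
def PmRed (X Y : Set ℕ) : Prop :=
  ∃ ψ : ℕ →. ℕ, Partrec ψ ∧ ∀ x, x ∈ X ↔ ∃ y ∈ ψ x, y ∈ Y

/-- pm-equivalence. -/
def PmEq (X Y : Set ℕ) : Prop := PmRed X Y ∧ PmRed Y X

/-- A simple set: c.e., with infinite complement containing no infinite c.e. subset. -/
def SimpleSet (S : Set ℕ) : Prop :=
  CE S ∧ Sᶜ.Infinite ∧ ∀ W : Set ℕ, W ⊆ Sᶜ → CE W → ¬ W.Infinite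

/-- A c.e. set `A` has a rigid complement: `Aᶜ` is infinite and any two
pm-equivalent subsets of `Aᶜ` have finite symmetric difference. -/
def RigidComplement (A : Set ℕ) : Prop :=
  Aᶜ.Infinite ∧ ∀ X Y : Set ℕ, X ⊆ Aᶜ → Y ⊆ Aᶜ → PmEq X Y → (symmDiff X Y).Finite

open Classical in
/-- Truth-table reducibility: a computable list of queries together with a
computable boolean truth-table evaluator. -/
def TTRed (X Y : Set ℕ) : Prop :=
  ∃ (q : ℕ → List ℕ) (t : ℕ → List Bool → Bool),
    Computable q ∧ Computable₂ t ∧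
      ∀ x, x ∈ X ↔ t x ((q x).map (fun n => decide (n ∈ Y))) = true

/-- Truth-table equivalence. -/
def TTEq (X Y : Set ℕ) : Prop := TTRed X Y ∧ TTRed Y X


namespace Myhill18

def find1 (x : ℕ) (L : List (ℕ × ℕ)) : Option (ℕ × ℕ) := L.find? (fun p => p.1 == x)
def find2 (y : ℕ) (L : List (ℕ × ℕ)) : Option (ℕ × ℕ) := L.find? (fun p => p.2 == y)

def mstep (f : ℕ → ℕ) (L : List (ℕ × ℕ)) (x : ℕ) : ℕ :=
  ((find2 (f x) L).map Prod.fst).getD x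

def mchase (f : ℕ → ℕ) (L : List (ℕ × ℕ)) (x : ℕ) : ℕ :=
  f ((mstep f L)^[L.length] x)

def mextD (f : ℕ → ℕ) (L : List (ℕ × ℕ)) (x : ℕ) : List (ℕ × ℕ) :=
  match find1 x L with
  | some _ => L
  | none => (x, mchase f L x) :: L

def mextR (g : ℕ → ℕ) (L : List (ℕ × ℕ)) (y : ℕ) : List (ℕ × ℕ) :=
  (mextD g (L.map Prod.swap) y).map Prod.swap

def mstate (f g : ℕ → ℕ) : ℕ → List (ℕ × ℕ)
  | 0 => []
  | n + 1 => mextR g (mextD f (mstate f g n) n) n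

def mh (f g : ℕ → ℕ) (x : ℕ) : ℕ :=
  ((find1 x (mstate f g (x + 1))).map Prod.snd).getD 0

def mg (f g : ℕ → ℕ) (y : ℕ) : ℕ :=
  ((find2 y (mstate f g (y + 1))).map Prod.fst).getD 0

def MInv (X Y : Set ℕ) (L : List (ℕ × ℕ)) : Prop :=
  (L.map Prod.fst).Nodup ∧ (L.map Prod.snd).Nodup ∧ ∀ p ∈ L, p.1 ∈ X ↔ p.2 ∈ Y

/-! ### find lemmas -/

theorem find1_eq_none {x L} : find1 x L = none ↔ x ∉ L.map Prod.fst := by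
  rw [find1, List.find?_eq_none]
  constructor
  · intro h hm
    obtain ⟨p, hp, hpx⟩ := List.mem_map.1 hm
    have := h p hp
    simp only [beq_iff_eq] at this
    exact this hpx
  · intro h p hp
    simp only [beq_iff_eq]
    intro hpx
    exact h (List.mem_map.2 ⟨p, hp, hpx⟩)

theorem find2_eq_none {y L} : find2 y L = none ↔ y ∉ L.map Prod.snd := by
  rw [find2, List.find?_eq_none]
  constructor
  · intro h hm
    obtain ⟨p, hp, hpy⟩ := List.mem_map.1 hm
    have := h p hp
    simp only [beq_iff_eq] at this
    exact this hpy
  · intro h p hp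
    simp only [beq_iff_eq]
    intro hpy
    exact h (List.mem_map.2 ⟨p, hp, hpy⟩)

theorem find1_spec {x L p} (h : find1 x L = some p) : p ∈ L ∧ p.1 = x :=
  ⟨List.mem_of_find?_eq_some h, by simpa using List.find?_some h⟩

theorem find2_spec {y L p} (h : find2 y L = some p) : p ∈ L ∧ p.2 = y :=
  ⟨List.mem_of_find?_eq_some h, by simpa using List.find?_some h⟩

theorem find2_isSome {y L} (h : y ∈ L.map Prod.snd) : ∃ p, find2 y L = some p := by
  rcases ho : find2 y L with _ | p
  · exact absurd (find2_eq_none.1 ho) (not_not.2 h)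
  · exact ⟨p, rfl⟩

theorem find1_isSome {x L} (h : x ∈ L.map Prod.fst) : ∃ p, find1 x L = some p := by
  rcases ho : find1 x L with _ | p
  · exact absurd (find1_eq_none.1 ho) (not_not.2 h)
  · exact ⟨p, rfl⟩

/-! ### uniqueness from Nodup -/

theorem fst_unique {L : List (ℕ × ℕ)} (hL : (L.map Prod.fst).Nodup)
    {p q : ℕ × ℕ} (hp : p ∈ L) (hq : q ∈ L) (h : p.1 = q.1) : p = q :=
  List.inj_on_of_nodup_map hL hp hq h

theorem snd_unique {L : List (ℕ × ℕ)} (hL : (L.map Prod.snd).Nodup)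
    {p q : ℕ × ℕ} (hp : p ∈ L) (hq : q ∈ L) (h : p.2 = q.2) : p = q :=
  List.inj_on_of_nodup_map hL hp hq h

/-! ### chase lemmas -/

section Chase

variable {X Y : Set ℕ} {f : ℕ → ℕ} {L : List (ℕ × ℕ)}

theorem mstep_mem (hL : MInv X Y L) (hf : ∀ x, x ∈ X ↔ f x ∈ Y) (x : ℕ) :
    (mstep f L x ∈ X ↔ x ∈ X) := by
  rcases ho : find2 (f x) L with _ | p
  · simp [mstep, ho]
  · obtain ⟨hpL, hp2⟩ := find2_spec ho
    have := hL.2.2 p hpL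
    simp only [mstep, ho, Option.map_some, Option.getD_some]
    rw [this, hp2, ← hf]

theorem iter_mem (hL : MInv X Y L) (hf : ∀ x, x ∈ X ↔ f x ∈ Y) (n : ℕ) (x : ℕ) :
    ((mstep f L)^[n] x ∈ X ↔ x ∈ X) := by
  induction n generalizing x with
  | zero => simp
  | succ n ih =>
      rw [Function.iterate_succ_apply]
      exact (ih (mstep f L x)).trans (mstep_mem hL hf x)

theorem mchase_mem (hL : MInv X Y L) (hf : ∀ x, x ∈ X ↔ f x ∈ Y) (x : ℕ) :
    (x ∈ X ↔ mchase f L x ∈ Y) := by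
  rw [mchase, ← hf, iter_mem hL hf]

theorem mstep_fix {x : ℕ} (h : f x ∉ L.map Prod.snd) : mstep f L x = x := by
  rw [mstep, find2_eq_none.2 h]; rfl

theorem mchase_not_mem (hL : MInv X Y L) (hfinj : Function.Injective f)
    {x : ℕ} (hx : x ∉ L.map Prod.fst) : mchase f L x ∉ L.map Prod.snd := by
  set c : ℕ → ℕ := fun k => (mstep f L)^[k] x with hc
  intro hmem
  -- all iterates up to L.length are non-terminal
  have H : ∀ k ≤ L.length, f (c k) ∈ L.map Prod.snd := by
    intro k hk
    by_contra hnot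
    -- then c is fixed from k on, so mchase = f (c L.length) = f (c k) ∉ snds
    have fix : ∀ m, c (k + m) = c k := by
      intro m
      induction m with
      | zero => rfl
      | succ m ih =>
          have : c (k + (m + 1)) = mstep f L (c (k + m)) := by
            simp [hc, ← Function.iterate_succ_apply' (mstep f L)]
            rfl
          rw [this, ih, mstep_fix hnot]
    have : c L.length = c k := by
      have := fix (L.length - k)
      rwa [Nat.add_sub_cancel' hk] at this
    exact hnot (by rw [← this]; exact hmem)
  -- successor values lie in fsts
  have Hfst : ∀ k ≤ L.length, c (k + 1) ∈ L.map Prod.fst := by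
    intro k hk
    obtain ⟨p, hp⟩ := find2_isSome (H k hk)
    obtain ⟨hpL, _⟩ := find2_spec hp
    have : c (k + 1) = p.1 := by
      have : c (k + 1) = mstep f L (c k) := Function.iterate_succ_apply' (mstep f L) k x
      rw [this, mstep, hp]; rfl
    rw [this]
    exact List.mem_map.2 ⟨p, hpL, rfl⟩
  -- distinctness
  have Hdist : ∀ i j, i < j → j ≤ L.length + 1 → c i ≠ c j := by
    intro i
    induction i using Nat.strong_induction_on with
    | _ i ih =>
      intro j hij hj heq
      match i, j with
      | 0, j + 1 =>
          have : c (j + 1) ∈ L.map Prod.fst := Hfst j (by omega)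
          rw [← heq] at this
          exact hx this
      | i + 1, j + 1 =>
          obtain ⟨p, hp⟩ := find2_isSome (H i (by omega))
          obtain ⟨q, hq⟩ := find2_isSome (H j (by omega))
          obtain ⟨hpL, hp2⟩ := find2_spec hp
          obtain ⟨hqL, hq2⟩ := find2_spec hq
          have hci : c (i + 1) = p.1 := by
            rw [show c (i+1) = mstep f L (c i) from Function.iterate_succ_apply' _ i x,
              mstep, hp]; rfl
          have hcj : c (j + 1) = q.1 := by
            rw [show c (j+1) = mstep f L (c j) from Function.iterate_succ_apply' _ j x,
              mstep, hq]; rfl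
          have hpq : p = q := fst_unique hL.1 hpL hqL (by rw [← hci, ← hcj, heq])
          have : f (c i) = f (c j) := by rw [hp2.symm.trans (by rw [hpq, hq2])]
          exact ih i (by omega) j (by omega) (by omega) (hfinj this)
  -- pigeonhole
  have hinj : Set.InjOn (fun k => c (k + 1)) ↑(Finset.range (L.length + 1)) := by
    intro i hi j hj hcij
    simp only [Finset.coe_range, Set.mem_Iio] at hi hj
    by_contra hne
    rcases Nat.lt_or_ge i j with h' | h'
    · exact Hdist (i+1) (j+1) (by omega) (by omega) hcij
    · exact Hdist (j+1) (i+1) (by omega) (by omega) hcij.symm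
  have hmapsto : ∀ k ∈ Finset.range (L.length + 1),
      (fun k => c (k + 1)) k ∈ (L.map Prod.fst).toFinset := by
    intro k hk
    simp only [Finset.mem_range] at hk
    exact List.mem_toFinset.2 (Hfst k (by omega))
  have hcard := Finset.card_le_card_of_injOn _ hmapsto hinj
  have h1 : (Finset.range (L.length + 1)).card = L.length + 1 := Finset.card_range _
  have h2 : (L.map Prod.fst).toFinset.card ≤ L.length := by
    simpa using List.toFinset_card_le (l := L.map Prod.fst)
  omega

end Chase

/-! ### extension lemmas -/

section Ext

variable {X Y : Set ℕ} {f g : ℕ → ℕ} {L : List (ℕ × ℕ)}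

theorem mextD_suffix (f : ℕ → ℕ) (L : List (ℕ × ℕ)) (x : ℕ) : L <:+ mextD f L x := by
  rw [mextD]
  rcases find1 x L with _ | p
  · exact List.suffix_cons _ _
  · exact List.suffix_rfl

theorem mextD_inv (hL : MInv X Y L) (hf : ∀ x, x ∈ X ↔ f x ∈ Y)
    (hfinj : Function.Injective f) (x : ℕ) : MInv X Y (mextD f L x) := by
  rw [mextD]
  rcases ho : find1 x L with _ | p
  · have hx : x ∉ L.map Prod.fst := find1_eq_none.1 ho
    have hy : mchase f L x ∉ L.map Prod.snd := mchase_not_mem hL hfinj hx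
    refine ⟨?_, ?_, ?_⟩
    · rw [List.map_cons]
      exact List.nodup_cons.2 ⟨hx, hL.1⟩
    · rw [List.map_cons]
      exact List.nodup_cons.2 ⟨hy, hL.2.1⟩
    · intro p hp
      rcases List.mem_cons.1 hp with rfl | hp
      · exact mchase_mem hL hf x
      · exact hL.2.2 p hp
  · exact hL

theorem mextD_mem_fst (f : ℕ → ℕ) (L : List (ℕ × ℕ)) (x : ℕ) :
    x ∈ (mextD f L x).map Prod.fst := by
  rw [mextD]
  rcases ho : find1 x L with _ | p
  · simp
  · obtain ⟨hpL, hp1⟩ := find1_spec ho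
    exact List.mem_map.2 ⟨p, hpL, hp1⟩

/-! ### swap lemmas -/

theorem swap_swap_list (L : List (ℕ × ℕ)) : (L.map Prod.swap).map Prod.swap = L := by
  rw [List.map_map]
  simp [Prod.swap_swap, Function.comp]

theorem MInv_swap (hL : MInv X Y L) : MInv Y X (L.map Prod.swap) := by
  refine ⟨?_, ?_, ?_⟩
  · rw [List.map_map]
    exact hL.2.1
  · rw [List.map_map]
    exact hL.1
  · intro p hp
    obtain ⟨q, hq, rfl⟩ := List.mem_map.1 hp
    exact (hL.2.2 q hq).symm

theorem mextR_suffix (g : ℕ → ℕ) (L : List (ℕ × ℕ)) (y : ℕ) : L <:+ mextR g L y := by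
  have := (mextD_suffix g (L.map Prod.swap) y).map Prod.swap
  rwa [swap_swap_list] at this

theorem mextR_inv (hL : MInv X Y L) (hg : ∀ y, y ∈ Y ↔ g y ∈ X)
    (hginj : Function.Injective g) (y : ℕ) : MInv X Y (mextR g L y) := by
  have h1 : MInv Y X (mextD g (L.map Prod.swap) y) := mextD_inv (MInv_swap hL) hg hginj y
  have h2 := MInv_swap h1
  exact h2

theorem mextR_mem_snd (g : ℕ → ℕ) (L : List (ℕ × ℕ)) (y : ℕ) :
    y ∈ (mextR g L y).map Prod.snd := by
  have := mextD_mem_fst g (L.map Prod.swap) y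
  rw [mextR, List.map_map]
  obtain ⟨p, hp, hp1⟩ := List.mem_map.1 this
  exact List.mem_map.2 ⟨p, hp, hp1⟩

end Ext

/-! ### state lemmas -/

section State

variable {X Y : Set ℕ} {f g : ℕ → ℕ}
variable (hf : ∀ x, x ∈ X ↔ f x ∈ Y) (hg : ∀ y, y ∈ Y ↔ g y ∈ X)
variable (hfinj : Function.Injective f) (hginj : Function.Injective g)

include hf hg hfinj hginj in
theorem mstate_inv : ∀ n, MInv X Y (mstate f g n)
  | 0 => ⟨List.nodup_nil, List.nodup_nil, fun p hp => absurd hp List.not_mem_nil⟩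
  | n + 1 =>
      mextR_inv (mextD_inv (mstate_inv n) hf hfinj n) hg hginj n

theorem mstate_suffix (f g : ℕ → ℕ) {m n : ℕ} (h : m ≤ n) :
    mstate f g m <:+ mstate f g n := by
  induction n with
  | zero => rw [Nat.le_zero.1 h]
  | succ n ih =>
      rcases Nat.lt_or_ge m (n + 1) with h' | h'
      · exact (ih (by omega)).trans
          ((mextD_suffix f (mstate f g n) n).trans (mextR_suffix g _ n))
      · rw [Nat.le_antisymm h h']

theorem mstate_mem_fst (f g : ℕ → ℕ) (n : ℕ) :
    n ∈ (mstate f g (n + 1)).map Prod.fst := by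
  have h1 : n ∈ (mextD f (mstate f g n) n).map Prod.fst := mextD_mem_fst _ _ _
  have h2 := (mextR_suffix g (mextD f (mstate f g n) n) n).map Prod.fst
  exact h2.subset h1

theorem mstate_mem_snd (f g : ℕ → ℕ) (n : ℕ) :
    n ∈ (mstate f g (n + 1)).map Prod.snd :=
  mextR_mem_snd g _ n

include hf hg hfinj hginj in
theorem mstate_unique_fst {m n : ℕ} {p q : ℕ × ℕ}
    (hp : p ∈ mstate f g m) (hq : q ∈ mstate f g n) (h : p.1 = q.1) : p = q := by
  rcases Nat.le_total m n with h' | h'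
  · exact fst_unique (mstate_inv hf hg hfinj hginj n).1
      ((mstate_suffix f g h').subset hp) hq h
  · exact fst_unique (mstate_inv hf hg hfinj hginj m).1
      hp ((mstate_suffix f g h').subset hq) h

include hf hg hfinj hginj in
theorem mstate_unique_snd {m n : ℕ} {p q : ℕ × ℕ}
    (hp : p ∈ mstate f g m) (hq : q ∈ mstate f g n) (h : p.2 = q.2) : p = q := by
  rcases Nat.le_total m n with h' | h'
  · exact snd_unique (mstate_inv hf hg hfinj hginj n).2.1
      ((mstate_suffix f g h').subset hp) hq h
  · exact snd_unique (mstate_inv hf hg hfinj hginj m).2.1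
      hp ((mstate_suffix f g h').subset hq) h

/-! ### the isomorphism -/

theorem mh_spec (f g : ℕ → ℕ) (x : ℕ) : (x, mh f g x) ∈ mstate f g (x + 1) := by
  obtain ⟨p, hp⟩ := find1_isSome (mstate_mem_fst f g x)
  obtain ⟨hpL, hp1⟩ := find1_spec hp
  have : mh f g x = p.2 := by rw [mh, hp]; rfl
  rw [this, ← hp1, Prod.mk.eta]
  exact hp1 ▸ hpL

theorem mg_spec (f g : ℕ → ℕ) (y : ℕ) : (mg f g y, y) ∈ mstate f g (y + 1) := by
  obtain ⟨p, hp⟩ := find2_isSome (mstate_mem_snd f g y)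
  obtain ⟨hpL, hp2⟩ := find2_spec hp
  have : mg f g y = p.1 := by rw [mg, hp]; rfl
  rw [this, ← hp2, Prod.mk.eta]
  exact hp2 ▸ hpL

include hf hg hfinj hginj in
theorem pair_mh {x y n : ℕ} (h : (x, y) ∈ mstate f g n) : mh f g x = y := by
  have h2 := mh_spec f g x
  have := mstate_unique_fst hf hg hfinj hginj h2 h rfl
  exact congrArg Prod.snd this

include hf hg hfinj hginj in
theorem pair_mg {x y n : ℕ} (h : (x, y) ∈ mstate f g n) : mg f g y = x := by
  have h2 := mg_spec f g y
  have := mstate_unique_snd hf hg hfinj hginj h2 h rfl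
  exact congrArg Prod.fst this

include hf hg hfinj hginj in
theorem mg_mh (x : ℕ) : mg f g (mh f g x) = x :=
  pair_mg hf hg hfinj hginj (mh_spec f g x)

include hf hg hfinj hginj in
theorem mh_mg (y : ℕ) : mh f g (mg f g y) = y :=
  pair_mh hf hg hfinj hginj (mg_spec f g y)

include hf hg hfinj hginj in
theorem mh_mem (x : ℕ) : x ∈ X ↔ mh f g x ∈ Y :=
  (mstate_inv hf hg hfinj hginj (x + 1)).2.2 _ (mh_spec f g x)

end State

/-! ### computability -/

section Comp

theorem find?_eq_foldr {α} (q : α → Bool) (l : List α) :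
    l.find? q = l.foldr (fun a acc => bif q a then some a else acc) none := by
  induction l with
  | nil => rfl
  | cons a l ih =>
      rw [List.foldr_cons, ← ih, List.find?_cons]
      cases q a <;> simp [cond]

theorem primrec_swap : Primrec (Prod.swap : ℕ × ℕ → ℕ × ℕ) :=
  Primrec.pair Primrec.snd Primrec.fst

theorem primrec_mapswap : Primrec (fun L : List (ℕ × ℕ) => L.map Prod.swap) :=
  Primrec.list_map Primrec.id (primrec_swap.comp Primrec.snd).to₂

theorem primrec_find2 : Primrec₂ find2 := by
  have h : Primrec₂ (fun (y : ℕ) (L : List (ℕ × ℕ)) =>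
      L.foldr (fun a acc => bif a.2 == y then some a else acc) none) := by
    have := Primrec.list_foldr (α := ℕ × List (ℕ × ℕ)) (β := ℕ × ℕ)
      (σ := Option (ℕ × ℕ))
      (f := Prod.snd) (g := fun _ => none)
      (h := fun a p => bif p.1.2 == a.1 then some p.1 else p.2)
      Primrec.snd (Primrec.const none)
      (Primrec.cond
        (Primrec.beq.comp (Primrec.snd.comp (Primrec.fst.comp Primrec.snd))
          (Primrec.fst.comp Primrec.fst))
        (Primrec.option_some.comp (Primrec.fst.comp Primrec.snd))
        (Primrec.snd.comp Primrec.snd)).to₂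
    exact Primrec₂.mk this
  exact h.of_eq fun y L => (find?_eq_foldr _ _).symm

theorem primrec_find1 : Primrec₂ find1 := by
  have h : Primrec₂ (fun (x : ℕ) (L : List (ℕ × ℕ)) =>
      L.foldr (fun a acc => bif a.1 == x then some a else acc) none) := by
    have := Primrec.list_foldr (α := ℕ × List (ℕ × ℕ)) (β := ℕ × ℕ)
      (σ := Option (ℕ × ℕ))
      (f := Prod.snd) (g := fun _ => none)
      (h := fun a p => bif p.1.1 == a.1 then some p.1 else p.2)
      Primrec.snd (Primrec.const none)
      (Primrec.cond
        (Primrec.beq.comp (Primrec.fst.comp (Primrec.fst.comp Primrec.snd))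
          (Primrec.fst.comp Primrec.fst))
        (Primrec.option_some.comp (Primrec.fst.comp Primrec.snd))
        (Primrec.snd.comp Primrec.snd)).to₂
    exact Primrec₂.mk this
  exact h.of_eq fun x L => (find?_eq_foldr _ _).symm

variable {f g : ℕ → ℕ} (hfc : Computable f) (hgc : Computable g)

include hfc in
theorem computable_mstep : Computable (fun p : List (ℕ × ℕ) × ℕ => mstep f p.1 p.2) := by
  have h1 : Computable (fun p : List (ℕ × ℕ) × ℕ => find2 (f p.2) p.1) :=
    primrec_find2.to_comp.comp (hfc.comp Computable.snd) Computable.fst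
  exact Computable.option_getD (Computable.option_map h1
    (Computable.fst.comp Computable.snd).to₂) Computable.snd

include hfc in
theorem computable_mchase : Computable (fun p : List (ℕ × ℕ) × ℕ => mchase f p.1 p.2) := by
  have hit : Computable (fun p : List (ℕ × ℕ) × ℕ =>
      Nat.rec (motive := fun _ => ℕ) p.2 (fun _ ih => mstep f p.1 ih) p.1.length) := by
    exact Computable.nat_rec (Computable.list_length.comp Computable.fst) Computable.snd
      ((computable_mstep hfc).comp
        (Computable.pair (Computable.fst.comp Computable.fst)
          (Computable.snd.comp Computable.snd))).to₂
  have heq : ∀ (L : List (ℕ × ℕ)) (x : ℕ) (n : ℕ),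
      (Nat.rec (motive := fun _ => ℕ) x (fun _ ih => mstep f L ih) n) = (mstep f L)^[n] x := by
    intro L x n
    induction n with
    | zero => rfl
    | succ n ih => rw [Function.iterate_succ_apply', ← ih]
  exact (hfc.comp hit).of_eq fun p => by rw [mchase, heq]

include hfc in
theorem computable_mextD : Computable (fun p : List (ℕ × ℕ) × ℕ => mextD f p.1 p.2) := by
  have ho : Computable (fun p : List (ℕ × ℕ) × ℕ => find1 p.2 p.1) :=
    primrec_find1.to_comp.comp Computable.snd Computable.fst
  have hcons : Computable (fun p : List (ℕ × ℕ) × ℕ =>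
      ((p.2, mchase f p.1 p.2) :: p.1 : List (ℕ × ℕ))) :=
    Primrec.list_cons.to_comp.comp
      (Computable.pair Computable.snd (computable_mchase hfc)) Computable.fst
  have := Computable.option_casesOn ho hcons (Computable.fst.comp Computable.fst).to₂
  exact this.of_eq fun p => by
    rcases h : find1 p.2 p.1 with _ | q <;> simp [mextD, h]

include hgc in
theorem computable_mextR : Computable (fun p : List (ℕ × ℕ) × ℕ => mextR g p.1 p.2) := by
  have := primrec_mapswap.to_comp.comp ((computable_mextD hgc).comp
    (Computable.pair (primrec_mapswap.to_comp.comp Computable.fst) Computable.snd))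
  exact this.of_eq fun p => rfl

set_option maxHeartbeats 1000000 in
include hfc hgc in
theorem computable_mstate : Computable (mstate f g) := by
  have hstep : Computable (fun p : ℕ × List (ℕ × ℕ) =>
      mextR g (mextD f p.2 p.1) p.1) :=
    (computable_mextR hgc).comp (Computable.pair
      ((computable_mextD hfc).comp (Computable.pair Computable.snd Computable.fst))
      Computable.fst)
  have := Computable.nat_rec (α := ℕ) Computable.id (Computable.const ([] : List (ℕ × ℕ)))
    (hstep.comp Computable.snd).to₂
  exact this.of_eq fun n => by
    induction n with
    | zero => rfl
    | succ n ih => simp [mstate, ← ih]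

include hfc hgc in
theorem computable_mh : Computable (mh f g) := by
  have h1 : Computable (fun x : ℕ => find1 x (mstate f g (x + 1))) :=
    primrec_find1.to_comp.comp Computable.id
      ((computable_mstate hfc hgc).comp (Computable.succ))
  exact Computable.option_getD (Computable.option_map h1
    (Computable.snd.comp Computable.snd).to₂) (Computable.const 0)

include hfc hgc in
theorem computable_mg : Computable (mg f g) := by
  have h1 : Computable (fun y : ℕ => find2 y (mstate f g (y + 1))) :=
    primrec_find2.to_comp.comp Computable.id
      ((computable_mstate hfc hgc).comp (Computable.succ))
  exact Computable.option_getD (Computable.option_map h1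
    (Computable.fst.comp Computable.snd).to₂) (Computable.const 0)

end Comp

end Myhill18

theorem stmt18 (A B : Set ℕ) (h : OneOneEq A B) :
    ∃ h' g : ℕ → ℕ, Computable h' ∧ Computable g ∧
      Function.LeftInverse g h' ∧ Function.RightInverse g h' ∧
      h' '' B = A ∧ h' '' Bᶜ = Aᶜ := by
  obtain ⟨⟨u, hu, huinj, hured⟩, ⟨v, hv, hvinj, hvred⟩⟩ := h
  refine ⟨Myhill18.mh v u, Myhill18.mg v u,
    Myhill18.computable_mh hv hu, Myhill18.computable_mg hv hu,
    Myhill18.mg_mh hvred hured hvinj huinj,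
    Myhill18.mh_mg hvred hured hvinj huinj, ?_, ?_⟩
  · ext a
    constructor
    · rintro ⟨b, hb, rfl⟩
      exact (Myhill18.mh_mem hvred hured hvinj huinj b).1 hb
    · intro ha
      refine ⟨Myhill18.mg v u a, ?_, Myhill18.mh_mg hvred hured hvinj huinj a⟩
      rw [Myhill18.mh_mem hvred hured hvinj huinj,
        Myhill18.mh_mg hvred hured hvinj huinj]
      exact ha
  · ext a
    constructor
    · rintro ⟨b, hb, rfl⟩
      intro hmem
      exact hb ((Myhill18.mh_mem hvred hured hvinj huinj b).2 hmem)
    · intro ha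
      refine ⟨Myhill18.mg v u a, ?_, Myhill18.mh_mg hvred hured hvinj huinj a⟩
      intro hmem
      apply ha
      rw [← Myhill18.mh_mg hvred hured hvinj huinj a]
      exact (Myhill18.mh_mem hvred hured hvinj huinj _).1 hmem
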